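/- For every triple of integers d, m, L ≥ 1 there exists n = n(d, m, L) such that the following holds. Let k = F_q be a finite field, V a finite-dimensional k-vector space, and P₁,…,P_L : V → k homogeneous polynomial functions each of degree at least 1 and at most d. Let X := {x ∈ V : Pᵢ(x) = 0 for 1 ≤ i ≤ L} and let a₁,…,a_m ∈ X. Then the set Y = {x ∈ V : Pᵢ(x + a_j) = 0 for all 1 ≤ i ≤ L and 1 ≤ j ≤ m} satisfies |Y| ≥ q^{−n}|V|. -/

import Mathlib

open Finset MvPolynomial Real

universe u

namespace Stmt16Aux
set_option linter.unusedSectionVars false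
set_option linter.unusedVariables false

/-- reduce an exponent mod `q-1` keeping positivity. -/
def redExp (q a : ℕ) : ℕ := if a = 0 then 0 else (a - 1) % (q - 1) + 1

lemma redExp_zero (q : ℕ) : redExp q 0 = 0 := rfl

lemma redExp_le_self (q a : ℕ) : redExp q a ≤ a := by
  rcases Nat.eq_zero_or_pos a with h | h
  · simp [h, redExp]
  · have : (a - 1) % (q - 1) ≤ a - 1 := Nat.mod_le _ _
    simp only [redExp, if_neg h.ne']
    omega

lemma redExp_le (q a : ℕ) (hq : 2 ≤ q) : redExp q a ≤ q - 1 := by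
  rcases Nat.eq_zero_or_pos a with h | h
  · simp [h, redExp]
  · have : (a - 1) % (q - 1) < q - 1 := Nat.mod_lt _ (by omega)
    simp only [redExp, if_neg h.ne']
    omega

lemma redExp_eq_zero_iff {q a : ℕ} : redExp q a = 0 ↔ a = 0 := by
  unfold redExp; split <;> simp_all

variable {K : Type*} [Field K] [Fintype K] [DecidableEq K]

lemma pow_redExp (x : K) (a : ℕ) : x ^ redExp (Fintype.card K) a = x ^ a := by
  rcases Nat.eq_zero_or_pos a with h | h
  · simp [h, redExp]
  rcases eq_or_ne x 0 with hx | hx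
  · rw [hx, zero_pow (by omega : a ≠ 0), zero_pow]
    rw [Ne, redExp_eq_zero_iff]; omega
  · have hx1 : x ^ (Fintype.card K - 1) = 1 := FiniteField.pow_card_sub_one_eq_one x hx
    simp only [redExp, if_neg h.ne']
    have hdm := Nat.div_add_mod (a - 1) (Fintype.card K - 1)
    conv_rhs => rw [show a = (Fintype.card K - 1) * ((a - 1) / (Fintype.card K - 1)) +
      ((a - 1) % (Fintype.card K - 1) + 1) by omega]
    conv_rhs => rw [pow_add, pow_mul, hx1]
    rw [one_pow, one_mul]


/-- Reduce an exponent multi-index. -/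
noncomputable def redIdx (q : ℕ) {σ : Type*} (s : σ →₀ ℕ) : σ →₀ ℕ :=
  Finsupp.mapRange (redExp q) (redExp_zero q) s

lemma redIdx_support {σ : Type*} (q : ℕ) (s : σ →₀ ℕ) : (redIdx q s).support = s.support := by
  ext i
  simp [redIdx, Finsupp.mem_support_iff, Finsupp.mapRange_apply, redExp_eq_zero_iff]

/-- The reduction of a multivariate polynomial modulo the field equations. -/
noncomputable def reduce {σ : Type*} (f : MvPolynomial σ K) : MvPolynomial σ K :=
  ∑ s ∈ f.support, monomial (redIdx (Fintype.card K) s) (coeff s f)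

lemma eval_reduce {σ : Type*} (x : σ → K) (f : MvPolynomial σ K) :
    eval x (reduce f) = eval x f := by
  rw [reduce, map_sum, eval_eq x f]
  refine Finset.sum_congr rfl fun s hs => ?_
  rw [eval_monomial]
  congr 1
  rw [Finsupp.prod, redIdx_support]
  refine Finset.prod_congr rfl fun i _ => ?_
  rw [redIdx, Finsupp.mapRange_apply, pow_redExp]

lemma totalDegree_reduce_le {σ : Type*} (f : MvPolynomial σ K) :
    (reduce f).totalDegree ≤ f.totalDegree := by
  refine (totalDegree_finset_sum _ _).trans (Finset.sup_le fun s hs => ?_)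
  refine (totalDegree_monomial_le _ _).trans ?_
  refine le_trans ?_ (le_totalDegree hs)
  rw [Finsupp.sum, Finsupp.sum, redIdx_support]
  exact Finset.sum_le_sum fun i _ => by
    rw [redIdx, Finsupp.mapRange_apply]; exact redExp_le_self _ _

lemma reduce_support {σ : Type*} [DecidableEq σ] (f : MvPolynomial σ K)
    (t : σ →₀ ℕ) (ht : t ∈ (reduce f).support) (i : σ) : t i ≤ Fintype.card K - 1 := by
  have h2 : 2 ≤ Fintype.card K := Fintype.one_lt_card
  have := MvPolynomial.support_sum ht
  simp only [Finset.mem_biUnion] at this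
  obtain ⟨s, hs, hts⟩ := this
  have := support_monomial_subset hts
  simp only [Finset.mem_singleton] at this
  subst this
  rw [redIdx, Finsupp.mapRange_apply]
  exact redExp_le _ _ h2


lemma key_real (q s : ℕ) (hq : 2 ≤ q) (hs : s ≤ q - 1) :
    (q : ℝ) ≤ ((q - s : ℕ) : ℝ) * (q : ℝ) ^ ((s : ℝ) / ((q : ℝ) - 1)) := by
  have hsq : s ≤ q := by omega
  have hQ1 : (1 : ℝ) < (q : ℝ) := by exact_mod_cast (by omega : 1 < q)
  have hQ0 : (0 : ℝ) < (q : ℝ) := by linarith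
  have hD : (0 : ℝ) < (q : ℝ) - 1 := by linarith
  have hS : (s : ℝ) ≤ (q : ℝ) - 1 := by
    have : (s : ℝ) ≤ ((q - 1 : ℕ) : ℝ) := by exact_mod_cast hs
    have h1 : ((q - 1 : ℕ) : ℝ) = (q : ℝ) - 1 := by
      push_cast [Nat.cast_sub (by omega : 1 ≤ q)]; ring
    linarith [this, h1.le]
  have hS0 : (0 : ℝ) ≤ (s : ℝ) := Nat.cast_nonneg s
  set Q := (q : ℝ)
  set S := (s : ℝ)
  have hy : ((q - s : ℕ) : ℝ) = Q - S := by
    push_cast [Nat.cast_sub hsq]; ring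
  set lam := (Q - S - 1) / (Q - 1) with hlam
  have hlam0 : 0 ≤ lam := div_nonneg (by linarith) (by linarith)
  have hlam1 : lam ≤ 1 := by
    rw [hlam, div_le_one hD]; linarith
  have hmul : lam * (Q - 1) = Q - S - 1 := div_mul_cancel₀ _ (by linarith)
  -- concavity of log
  have hcon := strictConcaveOn_log_Ioi.concaveOn.2 (Set.mem_Ioi.2 one_pos)
    (Set.mem_Ioi.2 hQ0) (by linarith : (0:ℝ) ≤ 1 - lam) hlam0 (by ring)
  have hval : (1 - lam) • (1 : ℝ) + lam • Q = Q - S := by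
    simp only [smul_eq_mul, mul_one]
    linarith [hmul]
  rw [hval] at hcon
  simp only [Real.log_one, smul_eq_mul, mul_zero, zero_add] at hcon
  -- Q ^ lam ≤ Q - S
  have hy0 : (0 : ℝ) < Q - S := by linarith
  have hrp : Q ^ lam ≤ Q - S := by
    rw [Real.rpow_def_of_pos hQ0]
    calc Real.exp (Real.log Q * lam) ≤ Real.exp (Real.log (Q - S)) := by
          apply Real.exp_le_exp.2; rw [mul_comm]; exact hcon
      _ = Q - S := Real.exp_log hy0
  have hsplit : lam + S / (Q - 1) = 1 := by
    rw [hlam, ← add_div, div_eq_one_iff_eq (by linarith)]; ring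
  calc Q = Q ^ (1 : ℝ) := (Real.rpow_one Q).symm
    _ = Q ^ lam * Q ^ (S / (Q - 1)) := by rw [← Real.rpow_add hQ0, hsplit]
    _ ≤ (Q - S) * Q ^ (S / (Q - 1)) :=
        mul_le_mul_of_nonneg_right hrp (Real.rpow_nonneg hQ0.le _)
    _ = ((q - s : ℕ) : ℝ) * Q ^ (S / (Q - 1)) := by rw [hy]


/-- the equiv splitting off the first coordinate -/
def consEquiv' (N : ℕ) : ((Fin N → K) × K) ≃ (Fin (N + 1) → K) where
  toFun p := Fin.cons p.2 p.1
  invFun x := (Fin.tail x, x 0)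
  left_inv p := by simp [Fin.tail_cons]
  right_inv x := by simp [Fin.cons_self_tail]

lemma main_count : ∀ (N : ℕ) (f : MvPolynomial (Fin N) K), f ≠ 0 →
    (∀ t ∈ f.support, ∀ i, t i ≤ Fintype.card K - 1) →
    ((Fintype.card K : ℝ)) ^ N ≤
      ((univ.filter fun x : Fin N → K => eval x f ≠ 0).card : ℝ) *
        (Fintype.card K : ℝ) ^ ((f.totalDegree : ℝ) / ((Fintype.card K : ℝ) - 1)) := by
  have hq : 2 ≤ Fintype.card K := Fintype.one_lt_card
  have hQ1 : (1 : ℝ) < (Fintype.card K : ℝ) := by exact_mod_cast (by omega : 1 < Fintype.card K)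
  have hQ0 : (0 : ℝ) < (Fintype.card K : ℝ) := by linarith
  have hD : (0 : ℝ) ≤ (Fintype.card K : ℝ) - 1 := by linarith
  intro N
  induction N with
  | zero =>
    intro f hf _
    obtain ⟨c, rfl⟩ := MvPolynomial.C_surjective (Fin 0) f
    have hc : c ≠ 0 := fun h => hf (by rw [h, map_zero])
    have hfil : (univ.filter fun x : Fin 0 → K => eval x (C c : MvPolynomial (Fin 0) K) ≠ 0)
        = univ := by
      refine Finset.filter_true_of_mem fun x _ => ?_
      simpa using hc
    rw [hfil]
    have hcard : (univ : Finset (Fin 0 → K)).card = 1 := by simp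
    rw [hcard]
    calc ((Fintype.card K : ℝ)) ^ (0 : ℕ) = 1 := pow_zero _
      _ = (Fintype.card K : ℝ) ^ (0 : ℝ) := (Real.rpow_zero _).symm
      _ ≤ (Fintype.card K : ℝ) ^
          (((C c : MvPolynomial (Fin 0) K).totalDegree : ℝ) / ((Fintype.card K : ℝ) - 1)) :=
        Real.rpow_le_rpow_of_exponent_le hQ1.le (div_nonneg (Nat.cast_nonneg _) hD)
      _ = 1 * _ := (one_mul _).symm
      _ = _ := by norm_num
  | succ N ih =>
    intro f hf hred
    set F := finSuccEquiv K N f with hFdef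
    have hF0 : F ≠ 0 := by
      rw [hFdef]
      exact (map_ne_zero_iff _ (finSuccEquiv K N).injective).2 hf
    set s := F.natDegree with hsdef
    set g := F.coeff s with hgdef
    have hg0 : g ≠ 0 := by
      rw [hgdef, hsdef]
      exact Polynomial.leadingCoeff_ne_zero.2 hF0
    have hs : s ≤ Fintype.card K - 1 := by
      have h1 : degreeOf 0 f ≤ Fintype.card K - 1 :=
        (degreeOf_le_iff).2 (fun t ht => hred t ht 0)
      rw [hsdef, hFdef, natDegree_finSuccEquiv f]
      exact h1
    have hredg : ∀ t ∈ g.support, ∀ i, t i ≤ Fintype.card K - 1 := by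
      intro t ht i
      have hmem : t.cons s ∈ f.support := mem_support_coeff_finSuccEquiv.1 ht
      have := hred _ hmem i.succ
      rwa [Finsupp.cons_succ] at this
    have hdeg : g.totalDegree + s ≤ f.totalDegree :=
      totalDegree_coeff_finSuccEquiv_add_le f s hg0
    have IH := ih g hg0 hredg
    -- per-fiber count
    have hcount : ∀ x' : Fin N → K, eval x' g ≠ 0 →
        (Fintype.card K - s : ℕ) ≤
          (univ.filter fun y : K => eval (Fin.cons y x') f ≠ 0).card := by
      intro x' hx'
      set p := Polynomial.map (eval x') F with hpdef
      have hps : p.coeff s = eval x' g := by rw [hpdef, Polynomial.coeff_map]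
      have hp0 : p ≠ 0 := fun h => hx' (by rw [← hps, h, Polynomial.coeff_zero])
      have heval : ∀ y : K, eval (Fin.cons y x') f = p.eval y := fun y =>
        eval_eq_eval_mv_eval' x' y f
      have hzero : (univ.filter fun y : K => eval (Fin.cons y x') f = 0).card ≤ s := by
        calc (univ.filter fun y : K => eval (Fin.cons y x') f = 0).card
            ≤ p.roots.toFinset.card := by
              apply Finset.card_le_card
              intro y hy
              rw [Finset.mem_filter] at hy
              rw [Multiset.mem_toFinset, Polynomial.mem_roots hp0]
              show p.eval y = 0
              rw [← heval y]
              exact hy.2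
          _ ≤ Multiset.card p.roots := p.roots.toFinset_card_le
          _ ≤ p.natDegree := Polynomial.card_roots' p
          _ ≤ s := Polynomial.natDegree_map_le
      have hpart := Finset.card_filter_add_card_filter_not
        (s := (univ : Finset K)) (p := fun y : K => eval (Fin.cons y x') f = 0)
      have hcardK : (univ : Finset K).card = Fintype.card K := Finset.card_univ
      have hgoal : (univ.filter fun y : K => eval (Fin.cons y x') f ≠ 0).card
          = (univ.filter fun y : K => ¬ eval (Fin.cons y x') f = 0).card := rfl
      omega
    -- fiber decomposition of the count
    have hsum : (univ.filter fun x : Fin (N + 1) → K => eval x f ≠ 0).card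
        = ∑ x' : Fin N → K,
            (univ.filter fun y : K => eval (Fin.cons y x') f ≠ 0).card := by
      rw [Finset.card_filter]
      rw [← Equiv.sum_comp (consEquiv' (K := K) N)
        (fun x : Fin (N + 1) → K => if eval x f ≠ 0 then 1 else 0)]
      rw [Fintype.sum_prod_type]
      exact Finset.sum_congr rfl fun x' _ => (Finset.card_filter _ _).symm
    have hA : (univ.filter fun x' : Fin N → K => eval x' g ≠ 0).card * (Fintype.card K - s)
        ≤ (univ.filter fun x : Fin (N + 1) → K => eval x f ≠ 0).card := by
      rw [hsum]
      calc (univ.filter fun x' : Fin N → K => eval x' g ≠ 0).card * (Fintype.card K - s)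
          = ∑ _x' ∈ (univ.filter fun x' : Fin N → K => eval x' g ≠ 0), (Fintype.card K - s) := by
            rw [Finset.sum_const, smul_eq_mul]
        _ ≤ ∑ x' ∈ (univ.filter fun x' : Fin N → K => eval x' g ≠ 0),
              (univ.filter fun y : K => eval (Fin.cons y x') f ≠ 0).card :=
            Finset.sum_le_sum fun x' hx' => hcount x' (Finset.mem_filter.1 hx').2
        _ ≤ ∑ x' : Fin N → K, (univ.filter fun y : K => eval (Fin.cons y x') f ≠ 0).card :=
            Finset.sum_le_sum_of_subset (Finset.filter_subset _ _)
    -- real arithmetic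
    have key := key_real (Fintype.card K) s hq hs
    have hD0 : (0 : ℝ) < (Fintype.card K : ℝ) - 1 := by linarith
    have hcast : ((g.totalDegree : ℝ) + (s : ℝ)) ≤ (f.totalDegree : ℝ) := by
      exact_mod_cast hdeg
    have hegs : ((g.totalDegree : ℝ) + (s : ℝ)) / ((Fintype.card K : ℝ) - 1)
        ≤ (f.totalDegree : ℝ) / ((Fintype.card K : ℝ) - 1) := by gcongr
    have hSg0 : (0 : ℝ) ≤ ((univ.filter fun x' : Fin N → K => eval x' g ≠ 0).card : ℝ) :=
      Nat.cast_nonneg _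
    have hAc : ((univ.filter fun x' : Fin N → K => eval x' g ≠ 0).card : ℝ)
          * ((Fintype.card K - s : ℕ) : ℝ)
        ≤ ((univ.filter fun x : Fin (N + 1) → K => eval x f ≠ 0).card : ℝ) := by
      exact_mod_cast hA
    calc ((Fintype.card K : ℝ)) ^ (N + 1)
        = ((Fintype.card K : ℝ)) ^ N * (Fintype.card K : ℝ) := pow_succ _ _
      _ ≤ (((univ.filter fun x' : Fin N → K => eval x' g ≠ 0).card : ℝ) *
            (Fintype.card K : ℝ) ^ ((g.totalDegree : ℝ) / ((Fintype.card K : ℝ) - 1))) *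
          (((Fintype.card K - s : ℕ) : ℝ) *
            (Fintype.card K : ℝ) ^ ((s : ℝ) / ((Fintype.card K : ℝ) - 1))) :=
          mul_le_mul IH key hQ0.le
            (mul_nonneg hSg0 (Real.rpow_nonneg hQ0.le _))
      _ = (((univ.filter fun x' : Fin N → K => eval x' g ≠ 0).card : ℝ) *
            ((Fintype.card K - s : ℕ) : ℝ)) *
          ((Fintype.card K : ℝ) ^ ((g.totalDegree : ℝ) / ((Fintype.card K : ℝ) - 1)) *
            (Fintype.card K : ℝ) ^ ((s : ℝ) / ((Fintype.card K : ℝ) - 1))) := by ring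
      _ = (((univ.filter fun x' : Fin N → K => eval x' g ≠ 0).card : ℝ) *
            ((Fintype.card K - s : ℕ) : ℝ)) *
          (Fintype.card K : ℝ) ^ (((g.totalDegree : ℝ) + (s : ℝ)) /
            ((Fintype.card K : ℝ) - 1)) := by
          rw [← Real.rpow_add hQ0, ← add_div]
      _ ≤ ((univ.filter fun x : Fin (N + 1) → K => eval x f ≠ 0).card : ℝ) *
          (Fintype.card K : ℝ) ^ ((f.totalDegree : ℝ) / ((Fintype.card K : ℝ) - 1)) :=
          mul_le_mul hAc (Real.rpow_le_rpow_of_exponent_le hQ1.le hegs)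
            (Real.rpow_nonneg hQ0.le _) (Nat.cast_nonneg _)


/-- Warning-type bound: a polynomial function that is somewhere nonzero is nonzero
on at least a `q^(-deg/(q-1))` fraction of the space. -/
lemma main_count' (N : ℕ) (f : MvPolynomial (Fin N) K) (x₀ : Fin N → K)
    (h0 : eval x₀ f ≠ 0) :
    ((Fintype.card K : ℝ)) ^ N ≤
      ((univ.filter fun x : Fin N → K => eval x f ≠ 0).card : ℝ) *
        (Fintype.card K : ℝ) ^ ((f.totalDegree : ℝ) / ((Fintype.card K : ℝ) - 1)) := by
  have hq : 2 ≤ Fintype.card K := Fintype.one_lt_card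
  have hQ1 : (1 : ℝ) < (Fintype.card K : ℝ) := by exact_mod_cast (by omega : 1 < Fintype.card K)
  have hD : (0 : ℝ) < (Fintype.card K : ℝ) - 1 := by linarith
  have h0' : eval x₀ (reduce f) ≠ 0 := by rw [eval_reduce]; exact h0
  have hne : reduce f ≠ 0 := fun h => h0' (by rw [h, map_zero])
  have hmain := main_count N (reduce f) hne (fun t ht i => reduce_support f t ht i)
  have hfil : (univ.filter fun x : Fin N → K => eval x (reduce f) ≠ 0)
      = (univ.filter fun x : Fin N → K => eval x f ≠ 0) :=
    Finset.filter_congr fun x _ => by rw [eval_reduce]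
  rw [hfil] at hmain
  refine hmain.trans (mul_le_mul_of_nonneg_left ?_ (Nat.cast_nonneg _))
  refine Real.rpow_le_rpow_of_exponent_le hQ1.le ?_
  have := totalDegree_reduce_le f
  have hc : ((reduce f).totalDegree : ℝ) ≤ (f.totalDegree : ℝ) := by exact_mod_cast this
  gcongr

/-- substituting polynomials of degree at most 1 does not increase the total degree. -/
lemma totalDegree_bind₁_le {σ τ R : Type*} [CommSemiring R] (g : σ → MvPolynomial τ R)
    (hg : ∀ i, (g i).totalDegree ≤ 1) (p : MvPolynomial σ R) :
    (bind₁ g p).totalDegree ≤ p.totalDegree := by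
  rw [bind₁, aeval_def, eval₂_eq]
  refine (totalDegree_finset_sum _ _).trans (Finset.sup_le fun d hd => ?_)
  refine (totalDegree_mul _ _).trans ?_
  have h1 : (algebraMap R (MvPolynomial τ R) (coeff d p)).totalDegree = 0 := by
    rw [algebraMap_eq]; exact totalDegree_C _
  have h2 : (∏ i ∈ d.support, (g i) ^ (d i)).totalDegree ≤ ∑ i ∈ d.support, d i :=
    (totalDegree_finset_prod _ _).trans <| Finset.sum_le_sum fun i _ =>
      (totalDegree_pow _ _).trans (by
        calc d i * (g i).totalDegree ≤ d i * 1 := Nat.mul_le_mul_left _ (hg i)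
          _ = d i := Nat.mul_one _)
  rw [h1, zero_add]
  exact h2.trans (le_totalDegree hd)

lemma eval_bind₁K {σ τ : Type*} {K : Type*} [CommSemiring K] (x : τ → K)
    (g : σ → MvPolynomial τ K) (p : MvPolynomial σ K) :
    eval x (bind₁ g p) = eval (fun i => eval x (g i)) p :=
  eval₂Hom_bind₁ _ _ _ _


end Stmt16Aux

open Stmt16Aux

/-- For every triple `d, m, L ≥ 1` there exists `n = n(d, m, L)` such that:
for every finite field `k = F_q`, every `V = k^N`, homogeneous polynomials
`P₁,…,P_L : V → k` of degrees between `1` and `d`, and points `a₁,…,a_m` of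
`X = {x : Pᵢ(x) = 0 ∀i}`, the set `Y = {x ∈ V : Pᵢ(x + a_j) = 0 ∀ i, j}` satisfies
`|Y| ≥ q^{−n} |V|`. -/
theorem stmt16 (d m L : ℕ) (hd : 1 ≤ d) (hm : 1 ≤ m) (hL : 1 ≤ L) :
    ∃ n : ℕ,
      ∀ (k : Type u) [Field k] [Fintype k] [DecidableEq k] (N : ℕ)
        (P : Fin L → MvPolynomial (Fin N) k),
        (∀ i, ∃ e : ℕ, 1 ≤ e ∧ e ≤ d ∧ (P i).IsHomogeneous e) →
        ∀ a : Fin m → (Fin N → k),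
          (∀ j i, MvPolynomial.eval (a j) (P i) = 0) →
          ((Fintype.card k : ℝ) ^ n)⁻¹ * (Fintype.card (Fin N → k) : ℝ) ≤
            ((Finset.univ.filter
                (fun x : Fin N → k =>
                  ∀ (i : Fin L) (j : Fin m), MvPolynomial.eval (x + a j) (P i) = 0)).card : ℝ) := by
  refine ⟨d * m * L, ?_⟩
  intro k _ _ _ N P hP a ha
  have hq : 2 ≤ Fintype.card k := Fintype.one_lt_card
  have hQ1 : (1 : ℝ) < (Fintype.card k : ℝ) := by exact_mod_cast (by omega : 1 < Fintype.card k)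
  have hQ0 : (0 : ℝ) < (Fintype.card k : ℝ) := by linarith
  have hD : (0 : ℝ) < (Fintype.card k : ℝ) - 1 := by linarith
  -- the shifted polynomials
  set Q : Fin L → Fin m → MvPolynomial (Fin N) k :=
    fun i j => bind₁ (fun t => X t + C (a j t)) (P i) with hQdef
  have hQdeg : ∀ i j, (Q i j).totalDegree ≤ d := by
    intro i j
    refine (totalDegree_bind₁_le _ (fun t => ?_) _).trans ?_
    · refine (totalDegree_add _ _).trans (max_le ?_ ?_)
      · exact le_of_eq (totalDegree_X t)
      · rw [totalDegree_C]; omega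
    · obtain ⟨e, _, hed, hhom⟩ := hP i
      exact hhom.totalDegree_le.trans hed
  have hQeval : ∀ i j (x : Fin N → k), eval x (Q i j) = eval (x + a j) (P i) := by
    intro i j x
    rw [hQdef]
    rw [eval_bind₁K]
    have harg : (fun t => eval x (X t + C (a j t))) = x + a j := by
      funext t; simp
    rw [harg]
  -- the indicator polynomial
  set f : MvPolynomial (Fin N) k :=
    ∏ i : Fin L, ∏ j : Fin m, (1 - (Q i j) ^ (Fintype.card k - 1)) with hfdef
  have hfactor : ∀ i j, (1 - (Q i j) ^ (Fintype.card k - 1)).totalDegree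
      ≤ (Fintype.card k - 1) * d := by
    intro i j
    refine (totalDegree_sub _ _).trans (max_le ?_ ?_)
    · rw [totalDegree_one]; exact Nat.zero_le _
    · exact (totalDegree_pow _ _).trans (Nat.mul_le_mul_left _ (hQdeg i j))
  have hfdeg : f.totalDegree ≤ (Fintype.card k - 1) * (d * m * L) := by
    rw [hfdef]
    refine (totalDegree_finset_prod _ _).trans ?_
    calc ∑ i : Fin L, (∏ j : Fin m, (1 - (Q i j) ^ (Fintype.card k - 1))).totalDegree
        ≤ ∑ _i : Fin L, ∑ _j : Fin m, (Fintype.card k - 1) * d :=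
          Finset.sum_le_sum fun i _ => (totalDegree_finset_prod _ _).trans
            (Finset.sum_le_sum fun j _ => hfactor i j)
      _ = (Fintype.card k - 1) * (d * m * L) := by
          simp [Finset.sum_const, Finset.card_univ, mul_comm, mul_assoc, mul_left_comm]
  have hq1ne : Fintype.card k - 1 ≠ 0 := by omega
  have hx0 : eval (0 : Fin N → k) f ≠ 0 := by
    rw [hfdef, map_prod]
    rw [Finset.prod_eq_one fun i _ => ?_]
    · exact one_ne_zero
    · rw [map_prod, Finset.prod_eq_one fun j _ => ?_]
      rw [map_sub, map_one, map_pow, hQeval, zero_add, ha j i, zero_pow hq1ne, sub_zero]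
  have hmain := main_count' N f 0 hx0
  -- filter inclusion
  have hsub : (univ.filter fun x : Fin N → k => eval x f ≠ 0)
      ⊆ (univ.filter fun x : Fin N → k =>
          ∀ (i : Fin L) (j : Fin m), eval (x + a j) (P i) = 0) := by
    intro x hx
    rw [Finset.mem_filter] at hx ⊢
    refine ⟨Finset.mem_univ _, ?_⟩
    by_contra hcon
    push_neg at hcon
    obtain ⟨i, j, hij⟩ := hcon
    apply hx.2
    rw [hfdef, map_prod]
    refine Finset.prod_eq_zero (Finset.mem_univ i) ?_
    rw [map_prod]
    refine Finset.prod_eq_zero (Finset.mem_univ j) ?_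
    rw [map_sub, map_one, map_pow, hQeval, FiniteField.pow_card_sub_one_eq_one _ hij, sub_self]
  have hcard : ((univ.filter fun x : Fin N → k => eval x f ≠ 0).card : ℝ)
      ≤ ((univ.filter fun x : Fin N → k =>
          ∀ (i : Fin L) (j : Fin m), eval (x + a j) (P i) = 0).card : ℝ) := by
    exact_mod_cast Finset.card_le_card hsub
  -- final arithmetic
  have hexp : (f.totalDegree : ℝ) / ((Fintype.card k : ℝ) - 1) ≤ ((d * m * L : ℕ) : ℝ) := by
    rw [div_le_iff₀ hD]
    have h1 : (f.totalDegree : ℝ) ≤ (((Fintype.card k - 1) * (d * m * L) : ℕ) : ℝ) := by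
      exact_mod_cast hfdeg
    refine h1.trans (le_of_eq ?_)
    push_cast [Nat.cast_sub (by omega : 1 ≤ Fintype.card k)]
    ring
  have hrpow : (Fintype.card k : ℝ) ^ ((f.totalDegree : ℝ) / ((Fintype.card k : ℝ) - 1))
      ≤ (Fintype.card k : ℝ) ^ (d * m * L) := by
    calc (Fintype.card k : ℝ) ^ ((f.totalDegree : ℝ) / ((Fintype.card k : ℝ) - 1))
        ≤ (Fintype.card k : ℝ) ^ (((d * m * L : ℕ) : ℝ)) :=
          Real.rpow_le_rpow_of_exponent_le hQ1.le hexp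
      _ = (Fintype.card k : ℝ) ^ (d * m * L) := Real.rpow_natCast _ _
  have hcardfun : (Fintype.card (Fin N → k) : ℝ) = (Fintype.card k : ℝ) ^ N := by
    rw [Fintype.card_fun, Fintype.card_fin]
    push_cast
    ring
  rw [hcardfun, inv_mul_le_iff₀ (by positivity)]
  calc (Fintype.card k : ℝ) ^ N
      ≤ ((univ.filter fun x : Fin N → k => eval x f ≠ 0).card : ℝ) *
        (Fintype.card k : ℝ) ^ ((f.totalDegree : ℝ) / ((Fintype.card k : ℝ) - 1)) := hmain
    _ ≤ ((univ.filter fun x : Fin N → k =>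
          ∀ (i : Fin L) (j : Fin m), eval (x + a j) (P i) = 0).card : ℝ) *
        (Fintype.card k : ℝ) ^ (d * m * L) :=
          mul_le_mul hcard hrpow (Real.rpow_nonneg hQ0.le _) (Nat.cast_nonneg _)
    _ = (Fintype.card k : ℝ) ^ (d * m * L) * _ := mul_comm _ _
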